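/- Let F be a field and let A be an associative F-algebra generated by T_s, T_t satisfying (T_s−1)(T_s+q_s)=0 and (T_t−1)(T_t+q_t)=0 where q_s, q_t ∈ F are nonzero and distinct, together with the braid relation (T_s T_t T_s ⋯)_m = (T_t T_s T_t ⋯)_m for an odd integer m ≥ 3. Then T_s = T_t = 1 in A. -/
import Mathlib


/-- The alternating product `(a b a ⋯)` with `n` factors, starting with `a`. -/
def altProd {A : Type*} [Monoid A] (a b : A) (n : ℕ) : A :=
  ((List.range n).map (fun i => if Even i then a else b)).prod

lemma altProd_succ_left {A : Type*} [Monoid A] (a b : A) (n : ℕ) :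
    altProd a b (n + 1) = a * altProd b a n := by
  unfold altProd
  rw [List.range_succ_eq_map, List.map_cons, List.prod_cons, List.map_map]
  have : (fun i => if Even i then a else b) ∘ Nat.succ
      = fun i => if Even i then b else a := by
    funext i
    by_cases h : Even i <;> simp [h, Function.comp, Nat.succ_eq_add_one, Nat.even_add_one]
  rw [this]
  simp

lemma altProd_succ_right {A : Type*} [Monoid A] (a b : A) (n : ℕ) :
    altProd a b (n + 1) = altProd a b n * (if Even n then a else b) := by
  unfold altProd
  rw [List.range_succ, List.map_append, List.prod_append]
  simp

lemma isUnit_altProd {A : Type*} [Monoid A] {a b : A} (ha : IsUnit a) (hb : IsUnit b)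
    (n : ℕ) : IsUnit (altProd a b n) := by
  induction n generalizing a b with
  | zero => simp [altProd]
  | succ n ih => rw [altProd_succ_left]; exact ha.mul (ih hb ha)

lemma isUnit_of_quad {F : Type*} [Field F] {A : Type*} [Ring A] [Algebra F A]
    {x : A} {q : F} (hq : q ≠ 0)
    (h : (x - 1) * (x + algebraMap F A q) = 0) : IsUnit x := by
  have hx : x * (x + algebraMap F A q - 1) = algebraMap F A q := by
    have h' : x * (x + algebraMap F A q) = x + algebraMap F A q := by
      rw [sub_mul, one_mul, sub_eq_zero] at h; exact h
    rw [mul_sub, mul_one, h']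
    abel
  have comm : x * (x + algebraMap F A q - 1) = (x + algebraMap F A q - 1) * x := by
    rw [mul_sub, sub_mul, mul_add, add_mul, mul_one, one_mul, ← Algebra.commutes q x]
  have hx' : (x + algebraMap F A q - 1) * x = algebraMap F A q := by
    rw [← comm, hx]
  refine ⟨⟨x, q⁻¹ • (x + algebraMap F A q - 1), ?_, ?_⟩, rfl⟩
  · rw [mul_smul_comm, hx, Algebra.algebraMap_eq_smul_one, smul_smul,
      inv_mul_cancel₀ hq, one_smul]
  · rw [smul_mul_assoc, hx', Algebra.algebraMap_eq_smul_one, smul_smul,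
      inv_mul_cancel₀ hq, one_smul]

/-- Collapse: if `T_s, T_t` satisfy quadratic relations with distinct nonzero
parameters `q_s ≠ q_t` and the braid relation for an odd `m ≥ 3`, then
`T_s = T_t = 1`. -/
theorem hecke_collapse (F : Type*) [Field F] (A : Type*) [Ring A] [Algebra F A]
    (Ts Tt : A) (qs qt : F) (hqs : qs ≠ 0) (hqt : qt ≠ 0) (hne : qs ≠ qt)
    (m : ℕ) (hm : 3 ≤ m) (hodd : Odd m)
    (hs : (Ts - 1) * (Ts + algebraMap F A qs) = 0)
    (ht : (Tt - 1) * (Tt + algebraMap F A qt) = 0)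
    (hbraid : altProd Ts Tt m = altProd Tt Ts m) :
    Ts = 1 ∧ Tt = 1 := by
  have hmeven : ¬ Even m := Nat.not_even_iff_odd.mpr hodd
  have hw : IsUnit (altProd Ts Tt m) :=
    isUnit_altProd (isUnit_of_quad hqs hs) (isUnit_of_quad hqt ht) m
  -- Ts * w = w * Tt
  have hsw : Ts * altProd Ts Tt m = altProd Ts Tt m * Tt := by
    conv_lhs => rw [hbraid]
    rw [← altProd_succ_left, altProd_succ_right, if_neg hmeven]
  -- Tt * w = w * Ts
  have htw : Tt * altProd Ts Tt m = altProd Ts Tt m * Ts := by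
    rw [← altProd_succ_left, altProd_succ_right, if_neg hmeven, ← hbraid]
  set w := altProd Ts Tt m with hw_def
  -- transport the quadratic relation of Tt through w
  have e1 : (Ts + algebraMap F A qt) * w = w * (Tt + algebraMap F A qt) := by
    rw [add_mul, mul_add, hsw, Algebra.commutes]
  have h1 : (Ts - 1) * (Ts + algebraMap F A qt) * w = 0 := by
    rw [mul_assoc, e1, sub_mul, one_mul, ← mul_assoc, hsw, mul_assoc, ← mul_sub]
    have : Tt * (Tt + algebraMap F A qt) - (Tt + algebraMap F A qt)
        = (Tt - 1) * (Tt + algebraMap F A qt) := by noncomm_ring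
    rw [this, ht, mul_zero]
  have h2 : (Ts - 1) * (Ts + algebraMap F A qs) * w = 0 := by rw [hs, zero_mul]
  have hsub : (Ts - 1) * (algebraMap F A qt - algebraMap F A qs) * w = 0 := by
    have : (Ts - 1) * (algebraMap F A qt - algebraMap F A qs)
        = (Ts - 1) * (Ts + algebraMap F A qt) - (Ts - 1) * (Ts + algebraMap F A qs) := by
      noncomm_ring
    rw [this, sub_mul, h1, h2, sub_zero]
  have h3 : (qt - qs) • ((Ts - 1) * w) = 0 := by
    rw [Algebra.smul_def, ← mul_assoc, Algebra.commutes, map_sub]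
    exact hsub
  have h4 : (Ts - 1) * w = 0 := by
    have h5 := congrArg (fun x => (qt - qs)⁻¹ • x) h3
    simpa [smul_smul, inv_mul_cancel₀ (sub_ne_zero.mpr (Ne.symm hne))] using h5
  have hTs : Ts = 1 := by
    have h6 : (Ts - 1) * w = 0 * w := by rw [h4, zero_mul]
    have := hw.mul_right_cancel h6
    rwa [sub_eq_zero] at this
  refine ⟨hTs, ?_⟩
  have h7 : w * Tt = w * 1 := by rw [← hsw, hTs, one_mul, mul_one]
  exact (hw.mul_left_cancel h7)
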